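/- Non-preservation of convexity: with β, σ, K > 0, 1 < C < 1 + 2β/σ², and x' = 2βCK/((2β+σ²)(C−1)), the function V(x) = C(x−K)⁺ for x < x' and V(x) = x − (CKσ²/(2β+σ²))(x'/x)^{2β/σ²} for x ≥ x' is not convex on (0,∞), even though both x ↦ (x−K)⁺ and x ↦ C(x−K)⁺ are convex. -/

import Mathlib

open Set

lemma conv_aux (K c : ℝ) (hc : 0 ≤ c) :
    ConvexOn ℝ (Set.Ioi (0:ℝ)) (fun x => c * max (x - K) 0) := by
  refine ⟨convex_Ioi 0, fun x _ y _ a b ha hb hab => ?_⟩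
  simp only [smul_eq_mul]
  have h0 : 0 ≤ max (x - K) 0 := le_max_right _ _
  have h0' : 0 ≤ max (y - K) 0 := le_max_right _ _
  have h1 : max (a*x + b*y - K) 0 ≤ a * max (x-K) 0 + b * max (y-K) 0 := by
    apply max_le
    · have hk : a*x + b*y - K = a*(x-K) + b*(y-K) := by linear_combination K * hab
      rw [hk]
      exact add_le_add (mul_le_mul_of_nonneg_left (le_max_left _ _) ha)
        (mul_le_mul_of_nonneg_left (le_max_left _ _) hb)
    · exact add_nonneg (mul_nonneg ha h0) (mul_nonneg hb h0')
  calc c * max (a*x + b*y - K) 0 ≤ c * (a * max (x-K) 0 + b * max (y-K) 0) :=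
        mul_le_mul_of_nonneg_left h1 hc
    _ = a * (c * max (x-K) 0) + b * (c * max (y-K) 0) := by ring

lemma aux_key (m B C r x' K : ℝ) (hB : 0 < B) (hC : 1 < C)
    (hcm : C - 1 < m) (hr : 1 - m < r)
    (hmB : x' * (C - 1) = m * B) (hCK : C * K = (m + 1) * B)
    (hineq : (x' - B) * (2 * x' - K) ≤ (x' - K) * (2 * x' - B * r)) : False := by
  have hc : 0 < C - 1 := by linarith
  have hC0 : 0 < C := by linarith
  have e1 : x' * K * (C * (C - 1)) = m * (m + 1) * (B * B) := by
    linear_combination (C * K) * hmB + (m * B) * hCK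
  have e4 : x' * B * C * (C - 1) = m * (B * B) * C := by
    linear_combination (B * C) * hmB
  have e5 : K * B * C * (C - 1) = (m + 1) * (B * B) * (C - 1) := by
    linear_combination (B * (C - 1)) * hCK
  have e4r : x' * (B * r) * C * (C - 1) = m * (B * B) * r * C := by
    linear_combination (B * r * C) * hmB
  have e5r : K * (B * r) * C * (C - 1) = (m + 1) * (B * B) * r * (C - 1) := by
    linear_combination (B * r * (C - 1)) * hCK
  have hineq2 : (x' - B) * (2 * x' - K) * (C * (C - 1)) ≤
      (x' - K) * (2 * x' - B * r) * (C * (C - 1)) :=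
    mul_le_mul_of_nonneg_right hineq (le_of_lt (mul_pos hC0 hc))
  have hkey : 0 < (m - (C - 1)) * ((m - (1 - r)) * (B * B)) :=
    mul_pos (by linarith) (mul_pos (by linarith) (mul_pos hB hB))
  nlinarith [hineq2, hkey, e1, e4, e5, e4r, e5r]

theorem game_value_not_convex (β σ K C : ℝ) (hβ : 0 < β) (hσ : 0 < σ) (hK : 0 < K)
    (hC₁ : 1 < C) (hC₂ : C < 1 + 2 * β / σ ^ 2)
    (x' : ℝ) (hx' : x' = 2 * β * C * K / ((2 * β + σ ^ 2) * (C - 1)))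
    (V : ℝ → ℝ)
    (hV : V = fun x => if x < x' then C * max (x - K) 0
      else x - C * K * σ ^ 2 / (2 * β + σ ^ 2) * (x' / x) ^ (2 * β / σ ^ 2)) :
    ConvexOn ℝ (Ioi 0) (fun x => max (x - K) 0) ∧
      ConvexOn ℝ (Ioi 0) (fun x => C * max (x - K) 0) ∧
      ¬ ConvexOn ℝ (Ioi 0) V := by
  refine ⟨by simpa using conv_aux K 1 zero_le_one, conv_aux K C (by linarith), fun hcv => ?_⟩
  have hσ2 : (0:ℝ) < σ ^ 2 := by positivity
  have hc : 0 < C - 1 := by linarith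
  have hC0 : (0:ℝ) < C := by linarith
  have hden : (0:ℝ) < 2 * β + σ ^ 2 := by positivity
  obtain ⟨m, hm_def⟩ : ∃ m : ℝ, m = 2 * β / σ ^ 2 := ⟨_, rfl⟩
  obtain ⟨B, hB_def⟩ : ∃ B : ℝ, B = C * K * σ ^ 2 / (2 * β + σ ^ 2) := ⟨_, rfl⟩
  have hm : 0 < m := by rw [hm_def]; positivity
  have hcm : C - 1 < m := by rw [hm_def]; linarith
  have hBpos : 0 < B := by rw [hB_def]; positivity
  have hmB : x' * (C - 1) = m * B := by
    rw [hx', hm_def, hB_def]; field_simp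
  have hCK : C * K = (m + 1) * B := by
    rw [hm_def, hB_def]; field_simp
  have hx'pos : 0 < x' := by
    rw [hx']; exact div_pos (by positivity) (mul_pos hden hc)
  -- K < x'
  have hdiff : (x' - K) * (C * (C - 1)) = B * (m - (C - 1)) := by
    linear_combination C * hmB - (C - 1) * hCK
  have hKx' : K < x' := by
    nlinarith [hdiff, mul_pos hBpos (show (0:ℝ) < m - (C - 1) by linarith),
      mul_pos hC0 hc]
  have hD : 0 < 2 * x' - K := by linarith
  -- the value r = (1/2)^m and the Bernoulli-type bound
  obtain ⟨r, hr_def⟩ : ∃ r : ℝ, r = ((1:ℝ)/2) ^ m := ⟨_, rfl⟩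
  have hrexp : r = Real.exp (Real.log (1/2) * m) := by
    rw [hr_def]; exact Real.rpow_def_of_pos (by norm_num) m
  have hlog : Real.log ((1:ℝ)/2) = -Real.log 2 := by
    rw [one_div, Real.log_inv]
  have hlog2pos : (0:ℝ) < Real.log 2 := Real.log_pos (by norm_num)
  have hlog2lt : Real.log 2 < 1 := by
    have := Real.log_two_lt_d9; linarith
  have hrlow : 1 - m < r := by
    have hne : Real.log ((1:ℝ)/2) * m ≠ 0 := by
      rw [hlog]
      exact ne_of_lt (mul_neg_of_neg_of_pos (by linarith) hm)
    have h3 := Real.add_one_lt_exp hne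
    rw [← hrexp] at h3
    have h4 : m * Real.log 2 ≤ m := by
      nlinarith [mul_le_mul_of_nonneg_left hlog2lt.le hm.le]
    rw [hlog] at h3
    linarith
  -- values of V
  have hVK : V K = 0 := by
    rw [hV]; simp [hKx']
  have hVx' : V x' = x' - B := by
    rw [hV]
    simp only [lt_irrefl, if_false]
    rw [div_self (ne_of_gt hx'pos), Real.one_rpow, mul_one, hB_def]
  have hV2 : V (2 * x') = 2 * x' - B * r := by
    rw [hV]
    have hnlt : ¬ (2 * x' < x') := by linarith
    simp only [hnlt, if_false]
    have hq : x' / (2 * x') = (1:ℝ)/2 := by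
      rw [eq_div_iff (by norm_num : (2:ℝ) ≠ 0)]
      field_simp
    rw [hq, hB_def, hr_def, hm_def]
  -- apply convexity at K and 2x' with the combination giving x'
  have hmemK : K ∈ Ioi (0:ℝ) := mem_Ioi.mpr hK
  have hmem2 : 2 * x' ∈ Ioi (0:ℝ) := mem_Ioi.mpr (by linarith)
  have ha : (0:ℝ) ≤ x' / (2 * x' - K) := le_of_lt (div_pos hx'pos hD)
  have hb : (0:ℝ) ≤ (x' - K) / (2 * x' - K) := le_of_lt (div_pos (by linarith) hD)
  have hab : x' / (2 * x' - K) + (x' - K) / (2 * x' - K) = 1 := by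
    rw [← add_div, div_eq_one_iff_eq (ne_of_gt hD)]
    ring
  have hcomb := hcv.2 hmemK hmem2 ha hb hab
  have hpt : (x' / (2 * x' - K)) • K + ((x' - K) / (2 * x' - K)) • (2 * x') = x' := by
    simp only [smul_eq_mul]
    rw [div_mul_eq_mul_div, div_mul_eq_mul_div, ← add_div, div_eq_iff (ne_of_gt hD)]
    ring
  rw [hpt] at hcomb
  simp only [smul_eq_mul, hVK, hVx', hV2, mul_zero, zero_add] at hcomb
  rw [div_mul_eq_mul_div] at hcomb
  have hineq : (x' - B) * (2 * x' - K) ≤ (x' - K) * (2 * x' - B * r) :=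
    (le_div_iff₀ hD).mp hcomb
  exact aux_key m B C r x' K hBpos hC₁ hcm hrlow hmB hCK hineq
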